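/- Let 0 < a < b and y > 0. Define c = (b-a)/(b-a+y·ln(b/a)), α = ln c + 1, β = -c. Then B(b,y)/B(a,y) ≥ e^((α+β)(b-a)) · (b/a)^(yβ-1) · ((b+y)/(a+y)). -/

import Mathlib

open Real MeasureTheory intervalIntegral

noncomputable def B (x y : ℝ) : ℝ := ∫ t in (0:ℝ)..1, t ^ (x - 1) * (1 - t) ^ (y - 1)

lemma lemC {u y : ℝ} (hu : 1 < u) (hy : 0 < y) :
    u⁻¹ - (u + y)⁻¹ ≤ (Real.log u - Real.log (u - 1)) - (Real.log (u + y) - Real.log (u + y - 1)) := by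
  have hu0 : 0 < u := lt_trans one_pos hu
  have hv : u < u + y := by linarith
  have hcont1 : ContinuousOn (fun x : ℝ => (x - 1)⁻¹) (Set.uIcc u (u + y)) := by
    apply ContinuousOn.inv₀ (by fun_prop)
    intro x hx
    rw [Set.uIcc_of_le hv.le] at hx
    have := hx.1; intro h; rw [sub_eq_zero] at h; linarith
  have hcont2 : ContinuousOn (fun x : ℝ => x⁻¹) (Set.uIcc u (u + y)) := by
    apply ContinuousOn.inv₀ (by fun_prop)
    intro x hx
    rw [Set.uIcc_of_le hv.le] at hx
    have := hx.1; intro h; rw [h] at this; linarith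
  have h1 : ∫ x in u..(u+y), (x ^ 2)⁻¹ = u⁻¹ - (u+y)⁻¹ := by
    have e : ∀ x : ℝ, (x ^ 2)⁻¹ = x ^ (-2 : ℤ) := by
      intro x; rw [zpow_neg]; norm_cast
    simp_rw [e]
    rw [integral_zpow (Or.inr ⟨by norm_num, Set.notMem_uIcc_of_lt hu0 (by linarith)⟩)]
    have e1 : (-2 : ℤ) + 1 = -1 := by norm_num
    rw [e1]
    simp [zpow_neg]
    ring
  have hint1 : ∫ x in u..(u+y), (x-1)⁻¹ = Real.log (u+y-1) - Real.log (u-1) := by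
    have := intervalIntegral.integral_comp_sub_right (a := u) (b := u + y) (fun x => x⁻¹) 1
    rw [this, integral_inv (Set.notMem_uIcc_of_lt (by linarith) (by linarith)),
      Real.log_div (by linarith) (by linarith)]
  have hint2 : ∫ x in u..(u+y), x⁻¹ = Real.log (u+y) - Real.log u := by
    rw [integral_inv (Set.notMem_uIcc_of_lt hu0 (by linarith)),
      Real.log_div (by linarith) (by linarith)]
  have h2 : ∫ x in u..(u+y), ((x-1)⁻¹ - x⁻¹) =
      (Real.log (u+y-1) - Real.log (u-1)) - (Real.log (u+y) - Real.log u) := by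
    rw [intervalIntegral.integral_sub hcont1.intervalIntegrable hcont2.intervalIntegrable,
      hint1, hint2]
  have h3 : ∫ x in u..(u+y), (x ^ 2)⁻¹ ≤ ∫ x in u..(u+y), ((x-1)⁻¹ - x⁻¹) := by
    apply intervalIntegral.integral_mono_on hv.le
    · apply ContinuousOn.intervalIntegrable
      apply ContinuousOn.inv₀ (by fun_prop)
      intro x hx
      rw [Set.uIcc_of_le hv.le] at hx
      have := hx.1
      exact pow_ne_zero 2 (by intro h; rw [h] at this; linarith)
    · exact (hcont1.sub hcont2).intervalIntegrable
    · intro x hx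
      have hx1 : 1 < x := lt_of_lt_of_le hu hx.1
      have hx0 : 0 < x := by linarith
      have hxm : 0 < x - 1 := by linarith
      have key : (x - 1)⁻¹ - x⁻¹ = ((x - 1) * x)⁻¹ := by
        field_simp
        ring
      rw [key]
      apply inv_anti₀ (by positivity)
      nlinarith
  rw [← h1]
  calc ∫ x in u..(u+y), (x ^ 2)⁻¹ ≤ _ := h3
    _ = _ := h2
    _ ≤ (Real.log u - Real.log (u - 1)) - (Real.log (u + y) - Real.log (u + y - 1)) := by linarith

lemma lemA {x y : ℝ} (hx : 0 < x) (hy : 0 < y) (n : ℕ) :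
    ∑ j ∈ Finset.range (n + 1), ((x + j)⁻¹ - (x + y + j)⁻¹) ≤
      x⁻¹ - (x + y)⁻¹ + (Real.log (x + n) - Real.log x) - (Real.log (x + y + n) - Real.log (x + y)) := by
  induction n with
  | zero => simp
  | succ n ih =>
    rw [Finset.sum_range_succ]
    have hu : 1 < x + (n + 1 : ℕ) := by
      push_cast; linarith [Nat.cast_nonneg (α := ℝ) n]
    have hc := lemC hu hy
    have e1 : x + (n + 1 : ℕ) - 1 = x + n := by push_cast; ring
    have e2 : x + (n + 1 : ℕ) + y = x + y + (n + 1 : ℕ) := by ring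
    have e3 : x + y + (n + 1 : ℕ) - 1 = x + y + n := by push_cast; ring
    rw [e1, e2, e3] at hc
    push_cast at hc ⊢
    linarith

lemma lemA' {x y : ℝ} (hx : 0 < x) (hy : 0 < y) (n : ℕ) :
    ∑ j ∈ Finset.range (n + 1), ((x + j)⁻¹ - (x + y + j)⁻¹) ≤
      x⁻¹ - (x + y)⁻¹ + (Real.log (x + y) - Real.log x) := by
  have h := lemA hx hy n
  have hmono : Real.log (x + n) ≤ Real.log (x + y + n) := by
    apply Real.log_le_log (by positivity); linarith [Nat.cast_nonneg (α := ℝ) n]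
  linarith

lemma lemB {x y L : ℝ} (hx : 0 < x) (hy : 0 < y) (hL : 0 < L) :
    Real.log (x + y) - Real.log x ≤
      Real.log (L + y) - Real.log L + (x⁻¹ - L⁻¹) * (y * L / (L + y)) := by
  have key := Real.log_le_sub_one_of_pos (x := (x + y) * L / ((L + y) * x)) (by positivity)
  have e : Real.log ((x + y) * L / ((L + y) * x)) =
      (Real.log (x + y) - Real.log x) - (Real.log (L + y) - Real.log L) := by
    rw [Real.log_div (by positivity) (by positivity), Real.log_mul (by positivity) (by positivity),
      Real.log_mul (by positivity) (by positivity)]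
    ring
  rw [e] at key
  have e2 : (x + y) * L / ((L + y) * x) - 1 = (x⁻¹ - L⁻¹) * (y * L / (L + y)) := by
    field_simp
    ring
  rw [e2] at key
  linarith

lemma ilog {a b c : ℝ} (ha : 0 < a) (hab : a < b) (hc : 0 ≤ c) :
    ∫ x in a..b, (x + c)⁻¹ = Real.log (b + c) - Real.log (a + c) := by
  have := intervalIntegral.integral_comp_add_right (a := a) (b := b) (fun x => x⁻¹) c
  rw [this, integral_inv (Set.notMem_uIcc_of_lt (by linarith) (by linarith)),
    Real.log_div (by linarith) (by linarith)]

lemma contInv {a b c : ℝ} (ha : 0 < a) (hab : a < b) (hc : 0 ≤ c) :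
    ContinuousOn (fun x : ℝ => (x + c)⁻¹) (Set.uIcc a b) := by
  apply ContinuousOn.inv₀ (by fun_prop)
  intro x hx
  rw [Set.uIcc_of_le hab.le] at hx
  have := hx.1; intro h; nlinarith

lemma mainInt {a b y : ℝ} (ha : 0 < a) (hab : a < b) (hy : 0 < y) (n : ℕ)
    {L : ℝ} (hL : 0 < L) (hLdef : L * (Real.log b - Real.log a) = b - a) :
    ∑ j ∈ Finset.range (n + 1),
        ((Real.log (b + j) - Real.log (a + j)) - (Real.log (b + y + j) - Real.log (a + y + j))) ≤
      (Real.log b - Real.log a) - (Real.log (b + y) - Real.log (a + y))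
        + (b - a) * (Real.log (L + y) - Real.log L) := by
  set W : ℝ := y * L / (L + y) with hW
  -- each summand is an integral
  have hterm : ∀ j : ℕ,
      (Real.log (b + j) - Real.log (a + j)) - (Real.log (b + y + j) - Real.log (a + y + j))
        = ∫ x in a..b, ((x + j)⁻¹ - (x + (y + j))⁻¹) := by
    intro j
    rw [intervalIntegral.integral_sub
      ((contInv ha hab j.cast_nonneg).intervalIntegrable)
      ((contInv ha hab (by positivity)).intervalIntegrable),
      ilog ha hab j.cast_nonneg, ilog ha hab (by positivity)]
    ring_nf
  have hsum : ∑ j ∈ Finset.range (n + 1),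
      ((Real.log (b + j) - Real.log (a + j)) - (Real.log (b + y + j) - Real.log (a + y + j)))
      = ∫ x in a..b, ∑ j ∈ Finset.range (n + 1), ((x + j)⁻¹ - (x + (y + j))⁻¹) := by
    rw [intervalIntegral.integral_finset_sum]
    · exact Finset.sum_congr rfl fun j _ => hterm j
    · intro j _
      exact (((contInv ha hab j.cast_nonneg).sub
        (contInv ha hab (by positivity))).intervalIntegrable)
  rw [hsum]
  -- the majorant
  have hmono : ∫ x in a..b, ∑ j ∈ Finset.range (n + 1), ((x + j)⁻¹ - (x + (y + j))⁻¹)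
      ≤ ∫ x in a..b, ((1 + W) * (x + 0)⁻¹ - (x + y)⁻¹
          + ((Real.log (L + y) - Real.log L) - L⁻¹ * W)) := by
    apply intervalIntegral.integral_mono_on hab.le
    · apply ContinuousOn.intervalIntegrable
      apply continuousOn_finset_sum
      intro j _
      exact (contInv ha hab j.cast_nonneg).sub (contInv ha hab (by positivity))
    · apply ContinuousOn.intervalIntegrable
      apply ContinuousOn.add
      apply ContinuousOn.sub
      · exact (contInv ha hab le_rfl).const_smul (1 + W)
      · exact contInv ha hab hy.le
      · exact continuousOn_const
    · intro x hx
      have hx0 : 0 < x := lt_of_lt_of_le ha hx.1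
      have h1 : ∑ j ∈ Finset.range (n + 1), ((x + j)⁻¹ - (x + (y + j))⁻¹)
          ≤ x⁻¹ - (x + y)⁻¹ + (Real.log (x + y) - Real.log x) := by
        have := lemA' hx0 hy n
        simp_rw [show ∀ j : ℕ, x + (y + (j : ℝ)) = x + y + j from fun j => by ring]
        exact this
      have h2 := lemB hx0 hy hL
      have : (x + 0)⁻¹ = x⁻¹ := by rw [add_zero]
      rw [this]
      nlinarith [h1, h2]
  refine hmono.trans (le_of_eq ?_)
  -- compute the integral of the majorant
  rw [intervalIntegral.integral_add, intervalIntegral.integral_sub,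
    intervalIntegral.integral_const_mul, ilog ha hab le_rfl, ilog ha hab hy.le,
    intervalIntegral.integral_const]
  · have hℓ : (b - a) * L⁻¹ = Real.log b - Real.log a := by
      field_simp
      linarith [hLdef]
    rw [add_zero, add_zero]
    have expand : (1 + W) * (Real.log b - Real.log a) - (Real.log (b+y) - Real.log (a+y))
        + (b - a) • ((Real.log (L + y) - Real.log L) - L⁻¹ * W)
        = (Real.log b - Real.log a) - (Real.log (b + y) - Real.log (a + y))
        + (b - a) * (Real.log (L + y) - Real.log L)
        + W * ((Real.log b - Real.log a) - (b - a) * L⁻¹) := by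
      simp only [smul_eq_mul]; ring
    rw [expand, hℓ]
    ring
  · exact ((contInv ha hab le_rfl).const_smul (1+W)).intervalIntegrable
  · exact (contInv ha hab hy.le).intervalIntegrable
  · apply ContinuousOn.intervalIntegrable
    exact (((contInv ha hab le_rfl).const_smul (1+W)).sub (contInv ha hab hy.le))
  · exact intervalIntegrable_const

lemma B_eq_Gamma {x y : ℝ} (hx : 0 < x) (hy : 0 < y) :
    B x y = Real.Gamma x * Real.Gamma y / Real.Gamma (x + y) := by
  have hofReal : ((B x y : ℝ) : ℂ) = Complex.betaIntegral x y := by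
    rw [B, ← intervalIntegral.integral_ofReal, Complex.betaIntegral]
    apply intervalIntegral.integral_congr
    intro t ht
    rw [Set.uIcc_of_le zero_le_one] at ht
    obtain ⟨ht0, ht1⟩ := ht
    push_cast
    rw [Complex.ofReal_cpow ht0, Complex.ofReal_cpow (show (0:ℝ) ≤ 1 - t by linarith)]
    push_cast
    ring
  have hkey := Complex.Gamma_mul_Gamma_eq_betaIntegral
    (s := (x : ℂ)) (t := (y : ℂ)) (by simpa using hx) (by simpa using hy)
  rw [← hofReal] at hkey
  rw [Complex.Gamma_ofReal, Complex.Gamma_ofReal, ← Complex.ofReal_add, Complex.Gamma_ofReal] at hkey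
  have : ((Real.Gamma x * Real.Gamma y : ℝ) : ℂ) = ((Real.Gamma (x + y) * B x y : ℝ) : ℂ) := by
    push_cast; exact hkey
  have h2 := Complex.ofReal_inj.mp this
  have hG : Real.Gamma (x + y) ≠ 0 := (Real.Gamma_pos_of_pos (by linarith)).ne'
  field_simp
  linarith [h2]

lemma GammaSeq_ratio {a b y : ℝ} (ha : 0 < a) (hab : a < b) (hy : 0 < y) {n : ℕ} (hn : 0 < n) :
    Real.GammaSeq b n * Real.GammaSeq (a + y) n / (Real.GammaSeq a n * Real.GammaSeq (b + y) n)
      = ∏ j ∈ Finset.range (n + 1), ((a + j) * (b + y + j) / ((b + j) * (a + y + j))) := by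
  have hnR : (0:ℝ) < n := by exact_mod_cast hn
  have hprod : ∀ s : ℝ, 0 < s → (0:ℝ) < ∏ j ∈ Finset.range (n + 1), (s + j) := by
    intro s hs
    apply Finset.prod_pos
    intro j _
    have : (0:ℝ) ≤ j := j.cast_nonneg
    linarith
  have hfact : (0:ℝ) < (Nat.factorial n : ℝ) := by exact_mod_cast Nat.factorial_pos n
  have hrpow : (n:ℝ) ^ b * (n:ℝ) ^ (a + y) = (n:ℝ) ^ a * (n:ℝ) ^ (b + y) := by
    rw [← Real.rpow_add hnR, ← Real.rpow_add hnR]; ring_nf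
  have hP1 := hprod a ha
  have hP2 := hprod b (by linarith)
  have hP3 := hprod (a + y) (by linarith)
  have hP4 := hprod (b + y) (by linarith)
  have hr1 : (0:ℝ) < (n:ℝ) ^ a := Real.rpow_pos_of_pos hnR a
  have hr2 : (0:ℝ) < (n:ℝ) ^ b := Real.rpow_pos_of_pos hnR b
  have hr3 : (0:ℝ) < (n:ℝ) ^ (a+y) := Real.rpow_pos_of_pos hnR (a+y)
  have hr4 : (0:ℝ) < (n:ℝ) ^ (b+y) := Real.rpow_pos_of_pos hnR (b+y)
  rw [Finset.prod_div_distrib, Finset.prod_mul_distrib, Finset.prod_mul_distrib]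
  simp only [Real.GammaSeq]
  set P1 := ∏ j ∈ Finset.range (n + 1), (a + (j:ℝ)) with hP1d
  set P2 := ∏ j ∈ Finset.range (n + 1), (b + (j:ℝ)) with hP2d
  set P3 := ∏ j ∈ Finset.range (n + 1), (a + y + (j:ℝ)) with hP3d
  set P4 := ∏ j ∈ Finset.range (n + 1), (b + y + (j:ℝ)) with hP4d
  field_simp
  linear_combination hrpow

theorem stmt9 (a b y : ℝ) (ha : 0 < a) (hab : a < b) (hy : 0 < y)
    (c α β : ℝ)
    (hc : c = (b - a) / (b - a + y * Real.log (b / a)))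
    (hα : α = Real.log c + 1) (hβ : β = -c) :
    Real.exp ((α + β) * (b - a)) * (b / a) ^ (y * β - 1) * ((b + y) / (a + y)) ≤
      B b y / B a y := by
  have hb : 0 < b := lt_trans ha hab
  have hℓ : 0 < Real.log b - Real.log a := sub_pos.mpr (Real.log_lt_log ha hab)
  set ℓ : ℝ := Real.log b - Real.log a with hℓdef
  set L : ℝ := (b - a) / ℓ with hLdef0
  have hL : 0 < L := div_pos (by linarith) hℓ
  have hLdef : L * ℓ = b - a := by
    rw [hLdef0]; field_simp
  have hlogba : Real.log (b / a) = ℓ := Real.log_div hb.ne' ha.ne'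
  have hden : 0 < b - a + y * ℓ := by nlinarith
  have hceq : c * (b - a + y * ℓ) = b - a := by
    rw [hc, hlogba]; field_simp
  have hLy : 0 < L + y := by linarith
  have hcval : c = L / (L + y) := by
    rw [hc, hlogba, hLdef0]
    rw [eq_div_iff (by positivity)]
    field_simp
  have hc0 : 0 < c := by rw [hcval]; positivity
  -- the target exponent
  set M : ℝ := (b - a) * (Real.log L - Real.log (L + y)) - ℓ
      + (Real.log (b + y) - Real.log (a + y)) with hM
  -- LHS equals exp M
  have hlogc : Real.log c = Real.log L - Real.log (L + y) := by
    rw [hcval, Real.log_div hL.ne' hLy.ne']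
  have hLHS : Real.exp ((α + β) * (b - a)) * (b / a) ^ (y * β - 1) * ((b + y) / (a + y))
      = Real.exp M := by
    rw [Real.rpow_def_of_pos (by positivity), hlogba,
      show (b + y) / (a + y) = Real.exp (Real.log ((b + y) / (a + y))) from
        (Real.exp_log (by positivity)).symm,
      ← Real.exp_add, ← Real.exp_add]
    congr 1
    rw [Real.log_div (by positivity) (by positivity)]
    rw [hα, hβ, hlogc, hM]
    linear_combination (-1 : ℝ) * hceq
  rw [hLHS]
  -- the Gamma-ratio limit
  have hΓa : 0 < Real.Gamma a := Real.Gamma_pos_of_pos ha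
  have hΓb : 0 < Real.Gamma b := Real.Gamma_pos_of_pos hb
  have hΓay : 0 < Real.Gamma (a + y) := Real.Gamma_pos_of_pos (by linarith)
  have hΓby : 0 < Real.Gamma (b + y) := Real.Gamma_pos_of_pos (by linarith)
  have hΓy : 0 < Real.Gamma y := Real.Gamma_pos_of_pos hy
  have hRatio : B b y / B a y
      = Real.Gamma b * Real.Gamma (a + y) / (Real.Gamma a * Real.Gamma (b + y)) := by
    rw [B_eq_Gamma hb hy, B_eq_Gamma ha hy]
    field_simp
  have htend : Filter.Tendsto
      (fun n => Real.GammaSeq b n * Real.GammaSeq (a + y) n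
        / (Real.GammaSeq a n * Real.GammaSeq (b + y) n)) Filter.atTop
      (nhds (Real.Gamma b * Real.Gamma (a + y) / (Real.Gamma a * Real.Gamma (b + y)))) := by
    exact Filter.Tendsto.div
      ((Real.GammaSeq_tendsto_Gamma b).mul (Real.GammaSeq_tendsto_Gamma (a + y)))
      ((Real.GammaSeq_tendsto_Gamma a).mul (Real.GammaSeq_tendsto_Gamma (b + y)))
      (by positivity)
  rw [hRatio]
  -- lower bound for each term of the sequence
  refine ge_of_tendsto htend ?_
  rw [Filter.eventually_atTop]
  refine ⟨1, fun n hn => ?_⟩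
  rw [GammaSeq_ratio ha hab hy (by omega)]
  have hterm : ∀ j : ℕ, (0:ℝ) < (a + j) * (b + y + j) / ((b + j) * (a + y + j)) := by
    intro j
    have : (0:ℝ) ≤ j := j.cast_nonneg
    positivity
  have hprodpos : (0:ℝ) < ∏ j ∈ Finset.range (n + 1),
      ((a + j) * (b + y + j) / ((b + j) * (a + y + j))) :=
    Finset.prod_pos fun j _ => hterm j
  rw [← Real.exp_log hprodpos]
  apply Real.exp_le_exp.mpr
  rw [Real.log_prod (fun j _ => (hterm j).ne')]
  have hlog : ∀ j : ℕ, Real.log ((a + j) * (b + y + j) / ((b + j) * (a + y + j)))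
      = -((Real.log (b + j) - Real.log (a + j)) - (Real.log (b + y + j) - Real.log (a + y + j))) := by
    intro j
    have h0 : (0:ℝ) ≤ j := j.cast_nonneg
    rw [Real.log_div (by positivity) (by positivity),
      Real.log_mul (by positivity) (by positivity),
      Real.log_mul (by positivity) (by positivity)]
    ring
  rw [Finset.sum_congr rfl fun j _ => hlog j, Finset.sum_neg_distrib]
  have := mainInt ha hab hy n hL hLdef
  rw [hM]
  linarith [this]
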